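/- Let M be a symmetric positive definite n×n real matrix, let L be an n×n real matrix with L + Lᵀ positive semidefinite, and let α > 0. Then the matrix L + (1/√α) M is invertible, and every eigenvalue λ of the matrix [(L + (1/√α) M) M⁻¹ (L + (1/√α) M)ᵀ]⁻¹ [L M⁻¹ Lᵀ + (1/α) M] is real and satisfies 1/2 ≤ λ ≤ 1. -/

import Mathlib

open Matrix

open scoped ComplexOrder

private lemma mapC_mul {n : ℕ} (A B : Matrix (Fin n) (Fin n) ℝ) :
    (A * B).map Complex.ofReal = A.map Complex.ofReal * B.map Complex.ofReal := by
  ext i j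
  simp [Matrix.mul_apply]

private lemma mapC_sub {n : ℕ} (A B : Matrix (Fin n) (Fin n) ℝ) :
    (A - B).map Complex.ofReal = A.map Complex.ofReal - B.map Complex.ofReal := by
  ext i j
  simp

private lemma mapC_det {n : ℕ} (A : Matrix (Fin n) (Fin n) ℝ) :
    (A.map Complex.ofReal).det = Complex.ofReal A.det :=
  (RingHom.map_det Complex.ofRealHom A).symm

private lemma psd_smul {n : ℕ} {Q : Matrix (Fin n) (Fin n) ℝ} (h : Q.PosSemidef)
    {c : ℝ} (hc : 0 ≤ c) : (c • Q).PosSemidef := by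
  refine Matrix.PosSemidef.of_dotProduct_mulVec_nonneg (by rw [IsHermitian, conjTranspose_smul, h.isHermitian.eq]; rfl) fun x => ?_
  rw [smul_mulVec, dotProduct_smul, smul_eq_mul]
  exact mul_nonneg hc (h.dotProduct_mulVec_nonneg x)

private lemma psd_map {n : ℕ} {Q : Matrix (Fin n) (Fin n) ℝ} (h : Q.PosSemidef) :
    (Q.map Complex.ofReal).PosSemidef := by
  obtain ⟨B, rfl⟩ : ∃ B : Matrix (Fin n) (Fin n) ℝ, Q = Bᴴ * B := by
    open scoped MatrixOrder Matrix.Norms.L2Operator in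
    exact CStarAlgebra.nonneg_iff_eq_star_mul_self.mp (Matrix.nonneg_iff_posSemidef.mpr h)
  have h1 : (Bᴴ * B).map Complex.ofReal
      = (B.map Complex.ofReal)ᴴ * (B.map Complex.ofReal) := by
    rw [mapC_mul]
    congr 1
    exact Matrix.conjTranspose_map Complex.ofReal (fun a => by simp)
  rw [h1]
  exact posSemidef_conjTranspose_mul_self _

/-- Matching-strategy eigenvalue bound: if `M` is symmetric positive definite,
`L + Lᵀ` is positive semidefinite and `α > 0`, then `L + (1/√α) M` is invertible and
every eigenvalue `μ` of `[(L + (1/√α)M) M⁻¹ (L + (1/√α)M)ᵀ]⁻¹ [L M⁻¹ Lᵀ + (1/α) M]`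
is real with `1/2 ≤ μ ≤ 1`. -/
theorem matching_schur_eig_bounds {n : ℕ}
    (M L : Matrix (Fin n) (Fin n) ℝ) (hM : M.PosDef)
    (hL : (L + Lᵀ).PosSemidef)
    (α : ℝ) (hα : 0 < α) :
    IsUnit (L + (Real.sqrt α)⁻¹ • M) ∧
      ∀ (μ : ℂ) (v : Fin n → ℂ), v ≠ 0 →
        ((((L + (Real.sqrt α)⁻¹ • M) * M⁻¹ * (L + (Real.sqrt α)⁻¹ • M)ᵀ)⁻¹ *
          (L * M⁻¹ * Lᵀ + α⁻¹ • M)).map Complex.ofReal) *ᵥ v = μ • v →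
        μ.im = 0 ∧ 1 / 2 ≤ μ.re ∧ μ.re ≤ 1 := by
  set c : ℝ := (Real.sqrt α)⁻¹ with hc_def
  have hc : 0 < c := inv_pos.mpr (Real.sqrt_pos.mpr hα)
  have hc2 : c * c = α⁻¹ := by
    rw [hc_def, ← mul_inv, Real.mul_self_sqrt hα.le]
  set B := L + c • M with hB_def
  have hMsymm : Mᵀ = M := by
    rw [← Matrix.conjTranspose_eq_transpose_of_trivial]; exact hM.isHermitian.eq
  have hMdet : IsUnit M.det := (Matrix.isUnit_iff_isUnit_det M).mp hM.isUnit
  have hMM : M * M⁻¹ = 1 := Matrix.mul_nonsing_inv M hMdet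
  have hMM' : M⁻¹ * M = 1 := Matrix.nonsing_inv_mul M hMdet
  -- B is invertible
  have hBunit : IsUnit B := by
    rw [Matrix.isUnit_iff_isUnit_det, isUnit_iff_ne_zero]
    intro hdet
    obtain ⟨v, hv, hBv⟩ := (Matrix.exists_mulVec_eq_zero_iff).mpr hdet
    have h1 : v ⬝ᵥ ((B + Bᵀ) *ᵥ v) = 0 := by
      rw [add_mulVec, dotProduct_add, hBv, dotProduct_zero, zero_add,
        Matrix.dotProduct_mulVec, Matrix.vecMul_transpose, hBv, zero_dotProduct]
    have h2 : v ⬝ᵥ ((B + Bᵀ) *ᵥ v)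
        = v ⬝ᵥ ((L + Lᵀ) *ᵥ v) + (c + c) * (v ⬝ᵥ (M *ᵥ v)) := by
      have hBBt : B + Bᵀ = (L + Lᵀ) + (c + c) • M := by
        rw [hB_def, transpose_add, transpose_smul, hMsymm, add_smul]
        abel
      rw [hBBt, add_mulVec, dotProduct_add, smul_mulVec, dotProduct_smul,
        smul_eq_mul]
    have h3 : 0 ≤ v ⬝ᵥ ((L + Lᵀ) *ᵥ v) := by
      simpa using hL.dotProduct_mulVec_nonneg v
    have h4 : 0 < v ⬝ᵥ (M *ᵥ v) := by
      simpa using hM.dotProduct_mulVec_pos hv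
    nlinarith [h1, h2, h3, h4]
  refine ⟨hBunit, fun μ v hv heig => ?_⟩
  -- real matrices S (numerator) and P (denominator)
  set S := L * M⁻¹ * Lᵀ + α⁻¹ • M with hS_def
  set P := B * M⁻¹ * Bᵀ with hP_def
  have hMinv : M⁻¹.PosDef := hM.inv
  have hLLt : (L * M⁻¹ * Lᵀ).PosSemidef := by
    have := hMinv.posSemidef.mul_mul_conjTranspose_same L
    rwa [Matrix.conjTranspose_eq_transpose_of_trivial] at this
  have hSpd : S.PosDef := by
    refine Matrix.PosDef.posSemidef_add hLLt ?_
    refine Matrix.PosDef.of_dotProduct_mulVec_pos ?_ fun x hx => ?_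
    · rw [IsHermitian, conjTranspose_smul, hM.isHermitian.eq]; rfl
    · rw [smul_mulVec, dotProduct_smul, smul_eq_mul]
      exact mul_pos (inv_pos.mpr hα) (by simpa using hM.dotProduct_mulVec_pos hx)
  have hcancel : M * (M⁻¹ * Lᵀ) = Lᵀ := Matrix.mul_nonsing_inv_cancel_left M Lᵀ hMdet
  have hPeq : P = S + c • (L + Lᵀ) := by
    rw [hP_def, hB_def, hS_def, transpose_add, transpose_smul, hMsymm]
    simp only [add_mul, mul_add, Matrix.smul_mul, Matrix.mul_smul, smul_smul, hc2,
      Matrix.mul_assoc, hMM', Matrix.mul_one, hcancel, smul_add]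
    abel
  have hPpsd : P.PosSemidef := by
    have := hMinv.posSemidef.mul_mul_conjTranspose_same B
    rwa [Matrix.conjTranspose_eq_transpose_of_trivial] at this
  have hPdet : P.det ≠ 0 := by
    rw [hP_def, Matrix.det_mul, Matrix.det_mul, Matrix.det_transpose]
    have h1 : B.det ≠ 0 := by
      intro h; exact ((Matrix.isUnit_iff_isUnit_det B).mp hBunit).ne_zero h
    have h2 : (M⁻¹).det ≠ 0 := hMinv.det_pos.ne'
    exact mul_ne_zero (mul_ne_zero h1 h2) h1
  -- the difference identities
  have hdiff1 : P - S = c • (L + Lᵀ) := by rw [hPeq]; abel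
  have hdiff2 : S - c • (L + Lᵀ) = (L - c • M) * M⁻¹ * (L - c • M)ᵀ := by
    rw [hS_def, transpose_sub, transpose_smul, hMsymm]
    simp only [sub_mul, mul_sub, Matrix.smul_mul, Matrix.mul_smul, smul_smul, hc2,
      Matrix.mul_assoc, hMM', Matrix.mul_one, hcancel, smul_add]
    abel
  have hdiff2psd : (S - c • (L + Lᵀ)).PosSemidef := by
    rw [hdiff2]
    have := hMinv.posSemidef.mul_mul_conjTranspose_same (L - c • M)
    rwa [Matrix.conjTranspose_eq_transpose_of_trivial] at this
  -- complex versions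
  set Pc : Matrix (Fin n) (Fin n) ℂ := P.map Complex.ofReal with hPc_def
  set Sc : Matrix (Fin n) (Fin n) ℂ := S.map Complex.ofReal with hSc_def
  have hPPinv : P * P⁻¹ = 1 :=
    Matrix.mul_nonsing_inv P (isUnit_iff_ne_zero.mpr hPdet)
  -- rewrite the eigenvalue equation : Sc *ᵥ v = μ • (Pc *ᵥ v)
  have hmapmul : (P⁻¹ * S).map Complex.ofReal
      = (P⁻¹).map Complex.ofReal * Sc :=
    mapC_mul _ _
  have hPcinv : Pc * (P⁻¹).map Complex.ofReal = 1 := by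
    rw [hPc_def, ← mapC_mul, hPPinv]
    ext i j
    by_cases h : i = j <;> simp [h, Matrix.one_apply]
  have heig' : Sc *ᵥ v = μ • (Pc *ᵥ v) := by
    have := congrArg (fun w => Pc *ᵥ w) heig
    simp only [hmapmul, Matrix.mulVec_mulVec, ← Matrix.mul_assoc, hPcinv,
      Matrix.one_mul, Matrix.mulVec_smul] at this
    exact this
  set p : ℂ := star v ⬝ᵥ (Pc *ᵥ v) with hp_def
  set s : ℂ := star v ⬝ᵥ (Sc *ᵥ v) with hs_def
  have hsp : s = μ * p := by
    rw [hs_def, heig', dotProduct_smul, smul_eq_mul, hp_def]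
  have hp0 : 0 ≤ p := (psd_map hPpsd).dotProduct_mulVec_nonneg v
  have hs0 : 0 ≤ s := (psd_map hSpd.posSemidef).dotProduct_mulVec_nonneg v
  have hpne : p ≠ 0 := by
    intro h
    have hPv : Pc *ᵥ v = 0 :=
      ((psd_map hPpsd).dotProduct_mulVec_zero_iff v).mp h
    have : Pc.det = 0 :=
      (Matrix.exists_mulVec_eq_zero_iff).mp ⟨v, hv, hPv⟩
    rw [hPc_def, mapC_det] at this
    exact hPdet (by exact_mod_cast this)
  -- p - s ≥ 0
  have hps : 0 ≤ p - s := by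
    have hpsd : ((c • (L + Lᵀ)).map Complex.ofReal).PosSemidef :=
      psd_map (psd_smul hL hc.le)
    have hform := hpsd.dotProduct_mulVec_nonneg v
    have hmap : (c • (L + Lᵀ)).map Complex.ofReal = Pc - Sc := by
      rw [hPc_def, hSc_def, ← hdiff1]
      exact mapC_sub _ _
    rw [hmap, Matrix.sub_mulVec, dotProduct_sub] at hform
    exact hform
  -- 2s - p ≥ 0
  have h2sp : 0 ≤ s - (p - s) := by
    have hpsd : ((S - c • (L + Lᵀ)).map Complex.ofReal).PosSemidef :=
      psd_map hdiff2psd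
    have hform := hpsd.dotProduct_mulVec_nonneg v
    have hmap : (S - c • (L + Lᵀ)).map Complex.ofReal = Sc - (Pc - Sc) := by
      have : S - c • (L + Lᵀ) = S - (P - S) := by rw [hdiff1]
      rw [this, hSc_def, hPc_def, mapC_sub, mapC_sub]
    rw [hmap, Matrix.sub_mulVec, dotProduct_sub, Matrix.sub_mulVec,
      dotProduct_sub] at hform
    exact hform
  -- extract real inequalities
  rw [Complex.le_def] at hp0 hs0 hps h2sp
  simp only [Complex.zero_re, Complex.zero_im, Complex.sub_re, Complex.sub_im] at hp0 hs0 hps h2sp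
  have hpim : p.im = 0 := hp0.2.symm
  have hsim : s.im = 0 := hs0.2.symm
  have hprepos : 0 < p.re := by
    rcases lt_or_eq_of_le hp0.1 with h | h
    · exact h
    · exact absurd (Complex.ext h.symm hpim) hpne
  have hre : s.re = μ.re * p.re := by
    have := congrArg Complex.re hsp
    rw [Complex.mul_re, hpim] at this
    simpa using this
  have him : μ.im = 0 := by
    have := congrArg Complex.im hsp
    rw [Complex.mul_im, hpim, hsim] at this
    simp only [mul_zero, zero_add] at this
    exact (mul_eq_zero.mp this.symm).resolve_right hprepos.ne'
  refine ⟨him, ?_, ?_⟩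
  · -- 1/2 ≤ μ.re : from p.re ≤ 2 s.re
    have h1 : p.re ≤ 2 * s.re := by linarith [h2sp.1]
    rw [hre] at h1
    nlinarith
  · -- μ.re ≤ 1 : from s.re ≤ p.re
    have h1 : s.re ≤ p.re := by linarith [hps.1]
    rw [hre] at h1
    nlinarith
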